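/- Let C be a conformal Lie algebra (vertex Lie algebra) with translation operator T and products u_n v for n ≥ 0. In the coefficient Lie algebra Ĉ = (C ⊗ ℂ[t,t^{-1}])/Im(T⊗1 + 1⊗d/dt), with bracket [u(m), v(n)] = ∑_{k≥0} C(m,k) (u_k v)(m+n−k), the subspaces Ĉ^− = span{u(m) : u ∈ C, m < 0} and Ĉ^+ = span{u(m) : u ∈ C, m ≥ 0} are Lie subalgebras, and Ĉ = Ĉ^− ⊕ Ĉ^+ as vector spaces. -/

import Mathlib

noncomputable section

/-- Generalized binomial coefficient `C(m,j)` for `m : ℤ`. -/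
def cchoose (m : ℤ) (j : ℕ) : ℂ :=
  (∏ t ∈ Finset.range j, ((m : ℂ) - (t : ℂ))) / (j.factorial : ℂ)

lemma cchoose_eq_zero {m : ℤ} (hm : 0 ≤ m) {k : ℕ} (hk : m < (k : ℤ)) :
    cchoose m k = 0 := by
  unfold cchoose
  rw [Finset.prod_eq_zero (i := m.toNat) (Finset.mem_range.mpr (by omega)) ?_, zero_div]
  have h : ((m.toNat : ℕ) : ℂ) = (m : ℂ) := by
    exact_mod_cast congrArg (Int.cast : ℤ → ℂ) (Int.toNat_of_nonneg hm)
  rw [h, sub_self]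

variable (C : Type*) [AddCommGroup C] [Module ℂ C] (T : C →ₗ[ℂ] C)

/-- The image of `T ⊗ 1 + 1 ⊗ d/dt` in `C ⊗ ℂ[t,t⁻¹] ≅ (ℤ →₀ C)`:
the span of the elements `(Tu)⊗t^m + m·u⊗t^{m-1}`. -/
def ImD : Submodule ℂ (ℤ →₀ C) :=
  Submodule.span ℂ {x : ℤ →₀ C | ∃ (u : C) (m : ℤ),
    x = Finsupp.single m (T u) + (m : ℂ) • Finsupp.single (m - 1) u}

/-- The coefficient space `Ĉ = (C ⊗ ℂ[t,t⁻¹]) / Im(T⊗1 + 1⊗d/dt)`. -/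
abbrev Chat := (ℤ →₀ C) ⧸ ImD C T

/-- `u(m)`, the image of `u ⊗ t^m` in `Ĉ`. -/
def elt (u : C) (m : ℤ) : Chat C T :=
  Submodule.Quotient.mk (Finsupp.single m u)

/-- `Ĉ⁻ = span{u(m) : m < 0}`. -/
def ChatNeg : Submodule ℂ (Chat C T) :=
  Submodule.span ℂ {x | ∃ (u : C) (m : ℤ), m < 0 ∧ x = elt C T u m}

/-- `Ĉ⁺ = span{u(m) : m ≥ 0}`. -/
def ChatPos : Submodule ℂ (Chat C T) :=
  Submodule.span ℂ {x | ∃ (u : C) (m : ℤ), 0 ≤ m ∧ x = elt C T u m}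

/- STATEMENT 17.  Let `(C, T, (u,v) ↦ uₙv)` be a conformal (vertex) Lie
algebra, with `Nb u v` a truncation bound for the products `uₙv`, and let
`B` be the Lie bracket of the coefficient algebra `Ĉ`, a bilinear map with
`[u(m), v(n)] = ∑_{k≥0} C(m,k)·(uₖv)(m+n-k)`.  Then `Ĉ⁻` and `Ĉ⁺` are
closed under the bracket (they are Lie subalgebras) and `Ĉ = Ĉ⁻ ⊕ Ĉ⁺`
as vector spaces. -/
theorem stmt17 (nprod : ℕ → C → C → C) (Nb : C → C → ℕ)
    (hNb : ∀ (u v : C) (n : ℕ), Nb u v ≤ n → nprod n u v = 0)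
    (hTshift : ∀ (u v : C) (n : ℕ),
      nprod (n + 1) (T u) v = (-((n : ℂ) + 1)) • nprod n u v)
    (hT0 : ∀ u v : C, nprod 0 (T u) v = 0)
    (hskew : ∀ (u v : C) (n : ℕ),
      nprod n u v = -∑ j ∈ Finset.range (Nb v u),
        ((-1 : ℂ)) ^ (n + j) • (((j.factorial : ℂ))⁻¹ • (⇑T)^[j] (nprod (n + j) v u)))
    (hJacobi : ∀ (u v w : C) (m n : ℕ),
      nprod m u (nprod n v w) - nprod n v (nprod m u w)
        = ∑ k ∈ Finset.range (Nb u v),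
            ((m.choose k : ℂ)) • nprod (m + n - k) (nprod k u v) w)
    (B : Chat C T →ₗ[ℂ] Chat C T →ₗ[ℂ] Chat C T)
    (hB : ∀ (u v : C) (m n : ℤ),
      B (elt C T u m) (elt C T v n)
        = ∑ k ∈ Finset.range (Nb u v),
            cchoose m k • elt C T (nprod k u v) (m + n - (k : ℤ))) :
    (∀ x ∈ ChatNeg C T, ∀ y ∈ ChatNeg C T, B x y ∈ ChatNeg C T) ∧
    (∀ x ∈ ChatPos C T, ∀ y ∈ ChatPos C T, B x y ∈ ChatPos C T) ∧
    ChatNeg C T ⊔ ChatPos C T = ⊤ ∧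
    ChatNeg C T ⊓ ChatPos C T = ⊥ := by
  classical
  -- closure of Ĉ⁻
  have hgenN : ∀ (u : C) (m : ℤ), m < 0 → ∀ (v : C) (n : ℤ), n < 0 →
      B (elt C T u m) (elt C T v n) ∈ ChatNeg C T := by
    intro u m hm v n hn
    rw [hB]
    refine Submodule.sum_mem _ fun k _ => Submodule.smul_mem _ _ ?_
    exact Submodule.subset_span ⟨nprod k u v, m + n - k, by omega, rfl⟩
  have hNegClosed : ∀ x ∈ ChatNeg C T, ∀ y ∈ ChatNeg C T, B x y ∈ ChatNeg C T := by
    intro x hx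
    refine Submodule.span_induction ?_ ?_ ?_ ?_ hx
    · rintro x ⟨u, m, hm, rfl⟩ y hy
      refine Submodule.span_induction ?_ ?_ ?_ ?_ hy
      · rintro y ⟨v, n, hn, rfl⟩; exact hgenN u m hm v n hn
      · rw [map_zero]; exact zero_mem _
      · intro a b _ _ ha hb; rw [map_add]; exact add_mem ha hb
      · intro c a _ ha; rw [map_smul]; exact Submodule.smul_mem _ _ ha
    · intro y _; rw [map_zero, LinearMap.zero_apply]; exact zero_mem _
    · intro a b _ _ ha hb y hy
      rw [map_add, LinearMap.add_apply]; exact add_mem (ha y hy) (hb y hy)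
    · intro c a _ ha y hy
      rw [map_smul, LinearMap.smul_apply]; exact Submodule.smul_mem _ _ (ha y hy)
  -- closure of Ĉ⁺
  have hgenP : ∀ (u : C) (m : ℤ), 0 ≤ m → ∀ (v : C) (n : ℤ), 0 ≤ n →
      B (elt C T u m) (elt C T v n) ∈ ChatPos C T := by
    intro u m hm v n hn
    rw [hB]
    refine Submodule.sum_mem _ fun k _ => ?_
    by_cases hk : (k : ℤ) ≤ m + n
    · exact Submodule.smul_mem _ _
        (Submodule.subset_span ⟨nprod k u v, m + n - k, by omega, rfl⟩)
    · rw [cchoose_eq_zero hm (by omega), zero_smul]; exact zero_mem _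
  have hPosClosed : ∀ x ∈ ChatPos C T, ∀ y ∈ ChatPos C T, B x y ∈ ChatPos C T := by
    intro x hx
    refine Submodule.span_induction ?_ ?_ ?_ ?_ hx
    · rintro x ⟨u, m, hm, rfl⟩ y hy
      refine Submodule.span_induction ?_ ?_ ?_ ?_ hy
      · rintro y ⟨v, n, hn, rfl⟩; exact hgenP u m hm v n hn
      · rw [map_zero]; exact zero_mem _
      · intro a b _ _ ha hb; rw [map_add]; exact add_mem ha hb
      · intro c a _ ha; rw [map_smul]; exact Submodule.smul_mem _ _ ha
    · intro y _; rw [map_zero, LinearMap.zero_apply]; exact zero_mem _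
    · intro a b _ _ ha hb y hy
      rw [map_add, LinearMap.add_apply]; exact add_mem (ha y hy) (hb y hy)
    · intro c a _ ha y hy
      rw [map_smul, LinearMap.smul_apply]; exact Submodule.smul_mem _ _ (ha y hy)
  -- sup = ⊤
  have hmk : ∀ f : ℤ →₀ C,
      Submodule.Quotient.mk (p := ImD C T) f ∈ ChatNeg C T ⊔ ChatPos C T := by
    intro f
    induction f using Finsupp.induction_linear with
    | zero => exact zero_mem _
    | add f g hf hg => rw [Submodule.Quotient.mk_add]; exact add_mem hf hg
    | single m u =>
      rcases lt_or_ge m 0 with hm | hm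
      · exact Submodule.mem_sup_left (Submodule.subset_span ⟨u, m, hm, rfl⟩)
      · exact Submodule.mem_sup_right (Submodule.subset_span ⟨u, m, hm, rfl⟩)
  have hsup : ChatNeg C T ⊔ ChatPos C T = ⊤ := by
    rw [eq_top_iff]
    rintro x -
    obtain ⟨f, rfl⟩ := Submodule.Quotient.mk_surjective _ x
    exact hmk f
  -- inf = ⊥
  set Fneg := Finsupp.supported C ℂ (Set.Iio (0 : ℤ)) with hFneg
  set Fpos := Finsupp.supported C ℂ (Set.Ici (0 : ℤ)) with hFpos
  have hImD : ImD C T ≤ (ImD C T ⊓ Fneg) ⊔ (ImD C T ⊓ Fpos) := by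
    rw [ImD, Submodule.span_le]
    rintro x ⟨u, m, rfl⟩
    have hx : Finsupp.single m (T u) + (m : ℂ) • Finsupp.single (m - 1) u ∈ ImD C T :=
      Submodule.subset_span ⟨u, m, rfl⟩
    rcases lt_or_ge m 0 with hm | hm
    · refine Submodule.mem_sup_left ⟨hx, ?_⟩
      rw [SetLike.mem_coe, hFneg, Finsupp.mem_supported']
      intro k hk
      have hk' : ¬ k < 0 := by simpa using hk
      simp only [Finsupp.add_apply, Finsupp.smul_apply, Finsupp.single_apply]
      rw [if_neg (by omega), if_neg (by omega)]
      simp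
    · refine Submodule.mem_sup_right ⟨hx, ?_⟩
      rw [SetLike.mem_coe, hFpos, Finsupp.mem_supported']
      intro k hk
      have hk' : k < 0 := by simpa using hk
      simp only [Finsupp.add_apply, Finsupp.smul_apply, Finsupp.single_apply]
      by_cases hm0 : m = 0
      · subst hm0
        rw [if_neg (by omega)]
        simp
      · rw [if_neg (by omega), if_neg (by omega)]
        simp
  have hmapN : ChatNeg C T = Submodule.map (ImD C T).mkQ Fneg := by
    apply le_antisymm
    · rw [ChatNeg, Submodule.span_le]
      rintro x ⟨u, m, hm, rfl⟩
      exact ⟨Finsupp.single m u, Finsupp.single_mem_supported ℂ u hm, rfl⟩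
    · rintro x ⟨f, hf, rfl⟩
      rw [Submodule.mkQ_apply, ← Finsupp.sum_single f, Finsupp.sum,
        ← Submodule.mkQ_apply, map_sum]
      refine Submodule.sum_mem _ fun a ha => Submodule.subset_span
        ⟨f a, a, (Finsupp.mem_supported ℂ f).mp hf ha, rfl⟩
  have hmapP : ChatPos C T = Submodule.map (ImD C T).mkQ Fpos := by
    apply le_antisymm
    · rw [ChatPos, Submodule.span_le]
      rintro x ⟨u, m, hm, rfl⟩
      exact ⟨Finsupp.single m u, Finsupp.single_mem_supported ℂ u hm, rfl⟩
    · rintro x ⟨f, hf, rfl⟩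
      rw [Submodule.mkQ_apply, ← Finsupp.sum_single f, Finsupp.sum,
        ← Submodule.mkQ_apply, map_sum]
      refine Submodule.sum_mem _ fun a ha => Submodule.subset_span
        ⟨f a, a, (Finsupp.mem_supported ℂ f).mp hf ha, rfl⟩
  have hinf : ChatNeg C T ⊓ ChatPos C T = ⊥ := by
    rw [eq_bot_iff]
    rintro x ⟨hxn, hxp⟩
    rw [hmapN] at hxn
    rw [hmapP] at hxp
    obtain ⟨f, hf, rfl⟩ := hxn
    obtain ⟨g, hg, hgf⟩ := hxp
    have h : g - f ∈ ImD C T := (Submodule.Quotient.eq _).mp hgf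
    obtain ⟨d1, hd1, d2, hd2, hsum⟩ := Submodule.mem_sup.mp (hImD h)
    have hd : d1 = g - f - d2 := by rw [← hsum]; abel
    have h0 : f + d1 = g - d2 := by rw [hd]; abel
    have hmem : f + d1 ∈ Fneg := add_mem hf hd1.2
    have hmem' : f + d1 ∈ Fpos := h0 ▸ sub_mem hg hd2.2
    have hdisj : Disjoint Fneg Fpos :=
      Finsupp.disjoint_supported_supported
        (Set.disjoint_left.mpr fun a ha hb => absurd (Set.mem_Ici.mp hb) (not_le.mpr (Set.mem_Iio.mp ha)))
    have hz : f + d1 = 0 := Submodule.disjoint_def.mp hdisj _ hmem hmem'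
    have hfImD : f ∈ ImD C T := by
      have : f = -d1 := eq_neg_of_add_eq_zero_left hz
      rw [this]; exact neg_mem hd1.1
    rw [Submodule.mem_bot, Submodule.mkQ_apply]
    exact (Submodule.Quotient.mk_eq_zero _).mpr hfImD
  exact ⟨hNegClosed, hPosClosed, hsup, hinf⟩

end
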